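/- arXiv:math/0212282 — 2 statements merged into one kernel-verified Lean document; each statement's English description precedes it below -/
import Mathlib

section
/- Let K be a field of characteristic 0, G a group, and ρ : G → GL(V) a finite-dimensional semisimple representation over K whose isotypic components are sums of absolutely irreducible representations. Let A ⊆ K be a Noetherian integral domain with Frac(A) = K such that tr(ρ(g)) ∈ A for all g ∈ G. Then the image of the group algebra A[G] in End_K(V) is a finitely generated A-module. -/
lemma aux_nilpotent_of_trace_pow {K : Type*} [Field K] [CharZero K] :
    ∀ (d : ℕ) {V : Type*} [AddCommGroup V] [Module K V] [FiniteDimensional K V],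
    Module.finrank K V ≤ d → ∀ f : Module.End K V,
    (∀ n : ℕ, 0 < n → LinearMap.trace K V (f ^ n) = 0) → IsNilpotent f := by
  intro d
  induction d with
  | zero =>
    intro V _ _ _ hd f _
    have : Module.finrank K V = 0 := Nat.le_zero.mp hd
    have : Subsingleton V := Module.finrank_zero_iff.mp this
    exact ⟨1, by ext v; simp [Subsingleton.elim (f v) 0]⟩
  | succ d ih =>
    intro V _ _ _ hd f htr
    rcases Nat.eq_zero_or_pos (Module.finrank K V) with h0 | hpos
    · have : Subsingleton V := Module.finrank_zero_iff.mp h0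
      exact ⟨1, by ext v; simp [Subsingleton.elim (f v) 0]⟩
    -- show det f = 0
    have hdet : LinearMap.det f = 0 := by
      have hCH := LinearMap.aeval_self_charpoly f
      rw [Polynomial.aeval_eq_sum_range] at hCH
      have htr2 := congrArg (LinearMap.trace K V) hCH
      rw [map_sum, map_zero] at htr2
      have hdeg : 0 < f.charpoly.natDegree + 1 := Nat.succ_pos _
      rw [Finset.sum_eq_single 0] at htr2
      · simp only [pow_zero, LinearMap.map_smul] at htr2
        rw [LinearMap.trace_one, smul_eq_mul] at htr2
        have h0ne : (Module.finrank K V : K) ≠ 0 := Nat.cast_ne_zero.mpr hpos.ne'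
        have hc0 : f.charpoly.coeff 0 = 0 := by
          rcases mul_eq_zero.mp htr2 with h | h
          · exact h
          · exact absurd h h0ne
        rw [LinearMap.det_eq_sign_charpoly_coeff, hc0, mul_zero]
      · intro i _ hne
        rw [LinearMap.map_smul, htr i (Nat.pos_of_ne_zero hne), smul_zero]
      · intro h; exact absurd (Finset.mem_range.mpr hdeg) h
    -- restrict to range
    set W := LinearMap.range f with hWdef
    have hWlt : W < ⊤ := LinearMap.range_lt_top_of_det_eq_zero hdet
    have hfW : ∀ x ∈ W, f x ∈ W := fun x _ => LinearMap.mem_range_self f x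
    set g := f.restrict hfW with hgdef
    have hrank : Module.finrank K W ≤ d := by
      have := Submodule.finrank_lt (K := K) (V := V) hWlt.ne
      omega
    have hgtr : ∀ n : ℕ, 0 < n → LinearMap.trace K W (g ^ n) = 0 := by
      intro n hn
      have hpowW : ∀ x, (f ^ n) x ∈ W := by
        intro x
        obtain ⟨m, hm⟩ := Nat.exists_eq_add_of_lt hn
        rw [hm, zero_add, pow_succ, Module.End.mul_apply]
        exact Module.End.pow_apply_mem_of_forall_mem m hfW _ (LinearMap.mem_range_self f x)
      have hres : g ^ n = (f ^ n).restrict (fun x _ => hpowW x) := by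
        rw [hgdef, Module.End.pow_restrict]
      rw [hres, LinearMap.trace_restrict_eq_of_forall_mem W (f ^ n) hpowW]
      exact htr n hn
    obtain ⟨k, hk⟩ := ih hrank g hgtr
    refine ⟨k + 1, ?_⟩
    ext v
    have hfv : f v ∈ W := LinearMap.mem_range_self f v
    have h1 : (f ^ k).restrict (fun x hx => Module.End.pow_apply_mem_of_forall_mem k hfW x hx) = g ^ k := by
      rw [hgdef, Module.End.pow_restrict]
    have h2 := congrArg (fun (z : Module.End K W) => ((z ⟨f v, hfv⟩ : W) : V)) h1
    simp only [LinearMap.restrict_apply, hk, LinearMap.zero_apply, ZeroMemClass.coe_zero] at h2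
    show (f ^ (k+1)) v = (0 : Module.End K V) v
    rw [LinearMap.zero_apply, pow_succ, Module.End.mul_apply]
    exact h2

lemma aux_trace_nondeg
    {K : Type*} [Field K] [CharZero K] {G : Type*} [Group G]
    {V : Type*} [AddCommGroup V] [Module K V] [FiniteDimensional K V]
    (ρ : Representation K G V)
    (hss : ∀ W : Submodule K V, (∀ g : G, ∀ x ∈ W, ρ g x ∈ W) →
      ∃ U : Submodule K V, (∀ g : G, ∀ x ∈ U, ρ g x ∈ U) ∧ IsCompl W U) :
    ∀ x ∈ Submodule.span K (Set.range fun g : G => (ρ g : V →ₗ[K] V)),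
      (∀ g : G, LinearMap.trace K V (x * ρ g) = 0) → x = 0 := by
  classical
  set E : Submodule K (Module.End K V) :=
    Submodule.span K (Set.range fun g : G => (ρ g : V →ₗ[K] V)) with hEdef
  have hρE : ∀ g : G, (ρ g : Module.End K V) ∈ E :=
    fun g => Submodule.subset_span ⟨g, rfl⟩
  -- E is closed under multiplication
  have hmulE : ∀ x ∈ E, ∀ y ∈ E, x * y ∈ E := by
    intro x hx
    induction hx using Submodule.span_induction with
    | mem x hxm =>
      obtain ⟨g, rfl⟩ := hxm
      intro y hy
      induction hy using Submodule.span_induction with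
      | mem y hym => obtain ⟨h, rfl⟩ := hym; rw [← map_mul]; exact hρE _
      | zero => rw [mul_zero]; exact E.zero_mem
      | add y z _ _ hy hz => rw [mul_add]; exact E.add_mem hy hz
      | smul c y _ hy => rw [mul_smul_comm]; exact E.smul_mem c hy
    | zero => intro y hy; rw [zero_mul]; exact E.zero_mem
    | add x z _ _ hx hz => intro y hy; rw [add_mul]; exact E.add_mem (hx y hy) (hz y hy)
    | smul c x _ hx => intro y hy; rw [smul_mul_assoc]; exact E.smul_mem c (hx y hy)
  have honeE : (1 : Module.End K V) ∈ E := by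
    have := hρE 1; rwa [map_one] at this
  have hpowE : ∀ x ∈ E, ∀ n : ℕ, x ^ n ∈ E := by
    intro x hx n
    induction n with
    | zero => rw [pow_zero]; exact honeE
    | succ m ih => rw [pow_succ]; exact hmulE _ ih _ hx
  -- E-stability of G-stable submodules
  have hstab : ∀ S : Submodule K V, (∀ g : G, ∀ v ∈ S, ρ g v ∈ S) →
      ∀ x ∈ E, ∀ v ∈ S, x v ∈ S := by
    intro S hSst x hx
    induction hx using Submodule.span_induction with
    | mem x hxm => obtain ⟨g, rfl⟩ := hxm; exact fun v hv => hSst g v hv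
    | zero => intro v _; rw [LinearMap.zero_apply]; exact S.zero_mem
    | add x y _ _ hx hy => intro v hv; rw [LinearMap.add_apply]; exact S.add_mem (hx v hv) (hy v hv)
    | smul c x _ hx => intro v hv; rw [LinearMap.smul_apply]; exact S.smul_mem c (hx v hv)
  -- extension of trace vanishing from generators to E
  have htrext : ∀ x : Module.End K V, (∀ g : G, LinearMap.trace K V (x * ρ g) = 0) →
      ∀ y ∈ E, LinearMap.trace K V (x * y) = 0 := by
    intro x hx y hy
    induction hy using Submodule.span_induction with
    | mem y hym => obtain ⟨g, rfl⟩ := hym; exact hx g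
    | zero => rw [mul_zero, map_zero]
    | add y z _ _ hy hz => rw [mul_add, map_add, hy, hz, add_zero]
    | smul c y _ hy => rw [mul_smul_comm, map_smul, hy, smul_zero]
  -- the radical N
  set N : Submodule K (Module.End K V) :=
    { carrier := {x | x ∈ E ∧ ∀ g : G, LinearMap.trace K V (x * ρ g) = 0}
      add_mem' := by
        rintro a b ⟨haE, ha⟩ ⟨hbE, hb⟩
        exact ⟨E.add_mem haE hbE, fun g => by rw [add_mul, map_add, ha g, hb g, add_zero]⟩
      zero_mem' := ⟨E.zero_mem, fun g => by rw [zero_mul, map_zero]⟩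
      smul_mem' := by
        rintro c a ⟨haE, ha⟩
        exact ⟨E.smul_mem c haE, fun g => by rw [smul_mul_assoc, map_smul, ha g, smul_zero]⟩ }
    with hNdef
  have hNE : ∀ x ∈ N, x ∈ E := fun x hx => hx.1
  have hNtr : ∀ x ∈ N, ∀ y ∈ E, LinearMap.trace K V (x * y) = 0 :=
    fun x hx => htrext x hx.2
  have hNmulL : ∀ x ∈ N, ∀ g : G, (ρ g : Module.End K V) * x ∈ N := by
    rintro x ⟨hxE, hxtr⟩ g
    refine ⟨hmulE _ (hρE g) x hxE, fun h => ?_⟩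
    rw [mul_assoc, LinearMap.trace_mul_comm, mul_assoc, ← map_mul]
    exact htrext x hxtr _ (hρE (h * g))
  have hNmulR : ∀ x ∈ N, ∀ g : G, x * (ρ g : Module.End K V) ∈ N := by
    rintro x ⟨hxE, hxtr⟩ g
    refine ⟨hmulE x hxE _ (hρE g), fun h => ?_⟩
    rw [mul_assoc, ← map_mul]
    exact hxtr (g * h)
  have hNnil : ∀ x ∈ N, IsNilpotent x := by
    intro x hx
    refine aux_nilpotent_of_trace_pow (Module.finrank K V) le_rfl x (fun n hn => ?_)
    obtain ⟨m, rfl⟩ := Nat.exists_eq_add_of_lt hn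
    rw [zero_add, pow_succ']
    exact hNtr x hx _ (hpowE x (hNE x hx) m)
  -- the common kernel U of N
  set U : Submodule K V :=
    { carrier := {v | ∀ x ∈ N, x v = 0}
      add_mem' := fun ha hb x hx => by rw [map_add, ha x hx, hb x hx, add_zero]
      zero_mem' := fun x _ => map_zero x
      smul_mem' := fun c v hv x hx => by rw [map_smul, hv x hx, smul_zero] }
    with hUdef
  have hUst : ∀ g : G, ∀ v ∈ U, ρ g v ∈ U := by
    intro g v hv x hx
    have : x * (ρ g : Module.End K V) ∈ N := hNmulR x hx g
    have h2 := hv _ this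
    rwa [Module.End.mul_apply] at h2
  obtain ⟨W, hWst, hcompl⟩ := hss U hUst
  have hWbot : W = ⊥ := by
    by_contra hW0
    have hPex : ∃ n : ℕ, ∃ S : Submodule K V, S ≤ W ∧ S ≠ ⊥ ∧
        (∀ g : G, ∀ v ∈ S, ρ g v ∈ S) ∧ Module.finrank K S = n :=
      ⟨_, W, le_rfl, hW0, hWst, rfl⟩
    obtain ⟨S, hSW, hS0, hSst, hSrk⟩ := Nat.find_spec hPex
    have hSU : S ≤ U := by
      intro s hs
      intro x hxN
      by_cases hs0 : s = 0
      · rw [hs0, map_zero]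
      · exfalso
        set Ns : Submodule K V := N.map (LinearMap.applyₗ s) with hNsdef
        have hNsS : Ns ≤ S := by
          rintro _ ⟨y, hy, rfl⟩
          exact hstab S hSst y (hNE y hy) s hs
        have hNsst : ∀ g : G, ∀ v ∈ Ns, ρ g v ∈ Ns := by
          rintro g _ ⟨y, hy, rfl⟩
          refine ⟨(ρ g : Module.End K V) * y, hNmulL y hy g, ?_⟩
          rfl
        rcases eq_or_ne Ns ⊥ with hbot | hne
        · -- then every element of N kills s; in particular s ∈ U ∩ W
          have hsU : s ∈ U := by
            intro y hy
            have : y s ∈ Ns := ⟨y, hy, rfl⟩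
            rw [hbot] at this
            simpa using this
          have : s ∈ U ⊓ W := ⟨hsU, hSW hs⟩
          rw [hcompl.inf_eq_bot] at this
          exact hs0 this
        · have hfind : Nat.find hPex ≤ Module.finrank K Ns :=
            Nat.find_min' hPex ⟨Ns, hNsS.trans hSW, hne, hNsst, rfl⟩
          have hSNs : Ns = S := Submodule.eq_of_le_of_finrank_le hNsS (by omega)
          have hsNs : s ∈ Ns := by rw [hSNs]; exact hs
          obtain ⟨y, hyN, hys⟩ := hsNs
          have hys' : y s = s := hys
          obtain ⟨k, hk⟩ := hNnil y hyN
          have hiter : ∀ m : ℕ, (y ^ m) s = s := by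
            intro m
            induction m with
            | zero => rw [pow_zero, Module.End.one_apply]
            | succ m ih => rw [pow_succ, Module.End.mul_apply, hys', ih]
          have := hiter k
          rw [hk, LinearMap.zero_apply] at this
          exact hs0 this.symm
    have : S ≤ ⊥ := by
      intro s hs
      rw [← hcompl.inf_eq_bot]
      exact ⟨hSU hs, hSW hs⟩
    exact hS0 (le_bot_iff.mp this)
  have hUtop : U = ⊤ := by
    have := hcompl.sup_eq_top
    rwa [hWbot, sup_bot_eq] at this
  intro x hxE hxtr
  have hxN : x ∈ N := ⟨hxE, hxtr⟩
  ext v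
  have hv : v ∈ U := hUtop ▸ Submodule.mem_top
  exact hv x hxN



/-- Let `K` be a field of characteristic 0, `G` a group, `ρ : G → GL(V)` a finite-dimensional
semisimple representation over `K` whose irreducible constituents are absolutely irreducible
(condition (ABS)).  Let `A ⊆ K` be a Noetherian integral domain with `Frac(A) = K` such that all
traces `tr ρ(g)` lie in `A`.  Then the image of `A[G]` in `End_K(V)`, i.e. the `A`-submodule of
`End_K(V)` generated by the `ρ(g)`, is a finitely generated `A`-module. -/
theorem image_of_group_algebra_finitely_generated
    (K : Type*) [Field K] [CharZero K]
    (G : Type*) [Group G]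
    (V : Type*) [AddCommGroup V] [Module K V] [FiniteDimensional K V]
    (ρ : Representation K G V)
    -- semisimplicity: every `G`-stable subspace has a `G`-stable complement
    (hss : ∀ W : Submodule K V, (∀ g : G, ∀ x ∈ W, ρ g x ∈ W) →
      ∃ U : Submodule K V, (∀ g : G, ∀ x ∈ U, ρ g x ∈ U) ∧ IsCompl W U)
    -- (ABS): every irreducible `G`-stable subspace is absolutely irreducible, i.e. its
    -- `G`-equivariant endomorphisms are scalars
    (habs : ∀ (W : Submodule K V) (hW : ∀ g : G, ∀ x ∈ W, ρ g x ∈ W), W ≠ ⊥ →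
      (∀ U : Submodule K V, U ≤ W → (∀ g : G, ∀ x ∈ U, ρ g x ∈ U) → U = ⊥ ∨ U = W) →
      ∀ f : W →ₗ[K] W, (∀ (g : G) (x : W), (f ⟨ρ g x, hW g x x.2⟩ : V) = ρ g (f x)) →
        ∃ c : K, ∀ x : W, f x = c • x)
    (A : Type*) [CommRing A] [IsDomain A] [IsNoetherianRing A]
    [Algebra A K] [IsFractionRing A K]
    [Module A V] [IsScalarTower A K V] [SMulCommClass K A V]
    (htr : ∀ g : G, ∃ a : A, algebraMap A K a = LinearMap.trace K V (ρ g)) :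
    (Submodule.span A (Set.range fun g : G => (ρ g : V →ₗ[K] V))).FG := by
  classical
  set ρl : G → (V →ₗ[K] V) := fun g => ρ g with hρldef
  have hρlmul : ∀ g h : G, ρl (g * h) = ρl g * ρl h := fun g h => map_mul ρ g h
  obtain ⟨b, hbsub, hbspan, hbind⟩ := exists_linearIndependent K (Set.range ρl)
  have hbfin : b.Finite := hbind.setFinite
  haveI : Fintype b := hbfin.fintype
  have hγ : ∀ i : b, ∃ g : G, ρl g = (i : V →ₗ[K] V) := fun i => hbsub i.2
  choose γ hγspec using hγ
  have hbspan' : Submodule.span K (Set.range ((↑) : b → (V →ₗ[K] V))) =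
      Submodule.span K (Set.range ρl) := by
    rw [Subtype.range_coe, hbspan]
  -- the Gram matrix
  set TK : Matrix b b K :=
    fun j i => LinearMap.trace K V ((i : V →ₗ[K] V) * (j : V →ₗ[K] V)) with hTKdef
  set T' : Matrix b b A := fun j i => (htr (γ i * γ j)).choose with hT'def
  have hT'spec : ∀ j i : b, algebraMap A K (T' j i) = TK j i := by
    intro j i
    have h1 : algebraMap A K (T' j i) = LinearMap.trace K V (ρl (γ i * γ j)) :=
      (htr (γ i * γ j)).choose_spec
    rw [h1, hρlmul, hγspec i, hγspec j]
  -- the linear system satisfied by coordinates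
  have hsystem : ∀ (x : V →ₗ[K] V) (c : b → K), (∑ i : b, c i • (i : V →ₗ[K] V)) = x →
      ∀ j : b, Matrix.mulVec TK c j = LinearMap.trace K V (x * (j : V →ₗ[K] V)) := by
    intro x c hc j
    have h2 : x * (j : V →ₗ[K] V) = ∑ i : b, c i • ((i : V →ₗ[K] V) * (j : V →ₗ[K] V)) := by
      rw [← hc, Finset.sum_mul]
      simp only [smul_mul_assoc]
    rw [h2, map_sum]
    simp only [LinearMap.map_smul, smul_eq_mul]
    simp [Matrix.mulVec, dotProduct, hTKdef, mul_comm]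
  -- nondegeneracy of the Gram matrix
  have hdet : TK.det ≠ 0 := by
    intro hdet0
    obtain ⟨c, hc0, hcv⟩ := (Matrix.exists_mulVec_eq_zero_iff).mpr hdet0
    set x : V →ₗ[K] V := ∑ i : b, c i • (i : V →ₗ[K] V) with hxdef
    have hxE : x ∈ Submodule.span K (Set.range ρl) := by
      refine Submodule.sum_mem _ fun i _ => Submodule.smul_mem _ _ ?_
      rw [← hbspan]
      exact Submodule.subset_span i.2
    have hxtr : ∀ y ∈ Submodule.span K (Set.range ρl), LinearMap.trace K V (x * y) = 0 := by
      have hbase : ∀ j : b, LinearMap.trace K V (x * (j : V →ₗ[K] V)) = 0 := by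
        intro j
        rw [← hsystem x c rfl j, hcv]
        rfl
      intro y hy
      rw [← hbspan'] at hy
      induction hy using Submodule.span_induction with
      | mem y hym => obtain ⟨j, rfl⟩ := hym; exact hbase j
      | zero => rw [mul_zero, map_zero]
      | add y z _ _ hy hz => rw [mul_add, map_add, hy, hz, add_zero]
      | smul a y _ hy => rw [mul_smul_comm, map_smul, hy, smul_zero]
    have hx0 : x = 0 := by
      refine aux_trace_nondeg ρ hss x hxE fun g => hxtr _ ?_
      exact Submodule.subset_span ⟨g, rfl⟩
    have := Fintype.linearIndependent_iff.mp hbind c (by rw [← hxdef, hx0])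
    exact hc0 (funext this)
  -- pull back to A
  have hdetT' : algebraMap A K T'.det = TK.det := by
    rw [RingHom.map_det]
    congr 1
    ext j i
    simp only [RingHom.mapMatrix_apply, Matrix.map_apply]
    exact hT'spec j i
  -- main inclusion
  set F : b → (V →ₗ[K] V) := fun i => (TK.det)⁻¹ • (i : V →ₗ[K] V) with hFdef
  set M₀ : Submodule A (V →ₗ[K] V) := Submodule.span A (Set.range F) with hM₀def
  have hmem : ∀ g : G, ρl g ∈ M₀ := by
    intro g
    have hgE : ρl g ∈ Submodule.span K (Set.range ((↑) : b → (V →ₗ[K] V))) := by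
      rw [hbspan']
      exact Submodule.subset_span ⟨g, rfl⟩
    obtain ⟨c, hc⟩ := (Submodule.mem_span_range_iff_exists_fun K).mp hgE
    -- the right-hand side vector over A
    set bv : b → A := fun j => (htr (g * γ j)).choose with hbvdef
    have hbvspec : ∀ j : b, algebraMap A K (bv j) =
        LinearMap.trace K V (ρl g * (j : V →ₗ[K] V)) := by
      intro j
      have h1 : algebraMap A K (bv j) = LinearMap.trace K V (ρl (g * γ j)) :=
        (htr (g * γ j)).choose_spec
      rw [h1, hρlmul, hγspec j]
    have hsys : Matrix.mulVec TK c = fun j => algebraMap A K (bv j) := by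
      funext j
      rw [hsystem (ρl g) c hc j, hbvspec j]
    -- solve the system via adjugate
    have hsolve : TK.det • c = fun i => algebraMap A K (Matrix.mulVec T'.adjugate bv i) := by
      have h3 : Matrix.mulVec TK.adjugate (Matrix.mulVec TK c) = TK.det • c := by
        rw [Matrix.mulVec_mulVec, Matrix.adjugate_mul, Matrix.smul_mulVec,
          Matrix.one_mulVec]
      rw [← h3, hsys]
      funext i
      have hadj : TK.adjugate = fun p q => algebraMap A K (T'.adjugate p q) := by
        have h4 : TK = (algebraMap A K).mapMatrix T' := by
          ext p q
          exact (hT'spec p q).symm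
        rw [h4, ← RingHom.map_adjugate]
        rfl
      rw [hadj]
      simp only [Matrix.mulVec, dotProduct]
      rw [map_sum]
      simp only [map_mul]
    have hc' : ∀ i : b, c i = (TK.det)⁻¹ * algebraMap A K (Matrix.mulVec T'.adjugate bv i) := by
      intro i
      have := congrFun hsolve i
      simp only [Pi.smul_apply, smul_eq_mul] at this
      field_simp
      rw [← this]
      ring
    have hrepr : ρl g = ∑ i : b, (Matrix.mulVec T'.adjugate bv i) • F i := by
      rw [← hc]
      refine Finset.sum_congr rfl fun i _ => ?_
      rw [hc' i, hFdef]
      rw [← algebraMap_smul K (Matrix.mulVec T'.adjugate bv i) ((TK.det)⁻¹ • (i : V →ₗ[K] V))]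
      rw [smul_smul, mul_comm]
    rw [hrepr]
    exact Submodule.sum_mem M₀ fun i _ =>
      Submodule.smul_mem M₀ _ (Submodule.subset_span ⟨i, rfl⟩)
  -- conclude by Noetherianity
  have hM₀fg : M₀.FG := Submodule.fg_span (Set.finite_range F)
  haveI : IsNoetherian A M₀ := isNoetherian_of_fg_of_noetherian _ hM₀fg
  set Sp : Submodule A (V →ₗ[K] V) := Submodule.span A (Set.range ρl) with hSpdef
  have hle : Sp ≤ M₀ := by
    rw [hSpdef, Submodule.span_le]
    rintro _ ⟨g, rfl⟩
    exact hmem g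
  have hfg1 : (Submodule.comap M₀.subtype Sp).FG := IsNoetherian.noetherian _
  have hfg2 := hfg1.map M₀.subtype
  rwa [Submodule.map_comap_subtype, inf_eq_right.mpr hle] at hfg2
end

section
/- Let K be a field, V a K-vector space of dimension d, and ρ : G → GL(V) an absolutely irreducible representation of a group G. Then there exist elements g_1, …, g_{d²} ∈ G such that the endomorphisms ρ(g_1), …, ρ(g_{d²}) form a K-basis of End_K(V), and the d² × d² matrix M with entries M_{k,l} = tr(ρ(g_k g_l)) is invertible. -/
open Module LinearMap

theorem my_burnside {L : Type*} [Field L] [IsAlgClosed L]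
    {W : Type*} [AddCommGroup W] [Module L W] [FiniteDimensional L W] [Nontrivial W]
    {G : Type*} [Monoid G] (τ : Representation L G W)
    (hirr : ∀ U : Submodule L W, (∀ g : G, ∀ x ∈ U, τ g x ∈ U) → U = ⊥ ∨ U = ⊤) :
    Submodule.span L (Set.range fun g : G => (τ g : W →ₗ[L] W)) = ⊤ := by
  classical
  letI R := MonoidAlgebra L G
  letI : Module R W := Module.compHom W (τ.asAlgebraHom.toRingHom)
  have hsmul : ∀ (r : R) (x : W), r • x = τ.asAlgebraHom r x := fun _ _ => rfl
  haveI : IsScalarTower L R W := ⟨fun c r x => by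
    rw [hsmul, hsmul, map_smul, LinearMap.smul_apply]⟩
  haveI : SMulCommClass L R W := ⟨fun c r x => by
    rw [hsmul, hsmul, map_smul]⟩
  haveI hsimple : IsSimpleModule R W := by
    refine (isSimpleModule_iff ..).mpr ⟨fun U => ?_⟩
    rcases hirr (U.restrictScalars L) (fun g x hx => by
      have h1 : τ g x = (MonoidAlgebra.single g (1:L) : R) • x := by
        rw [hsmul, τ.asAlgebraHom_single_one]
      simp only [Submodule.restrictScalars_mem] at hx ⊢
      rw [h1]
      exact U.smul_mem _ hx) with h | h
    · left; ext x
      have := Submodule.ext_iff.mp h x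
      simpa using this
    · right; ext x
      have := Submodule.ext_iff.mp h x
      simpa using this
  have hD : ∀ φ : W →ₗ[R] W, ∃ c : L, ∀ x : W, φ x = c • x := by
    intro φ
    let φL : W →ₗ[L] W :=
      { toFun := φ
        map_add' := φ.map_add
        map_smul' := fun c x => by
          show φ (c • x) = c • φ x
          rw [← algebraMap_smul R c x, φ.map_smul, algebraMap_smul] }
    obtain ⟨c, hc⟩ := Module.End.exists_eigenvalue φL
    obtain ⟨x, hx⟩ := hc.exists_hasEigenvector
    let ψ : W →ₗ[R] W := φ - c • (LinearMap.id : W →ₗ[R] W)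
    have hψx : ψ x = 0 := by
      have := hx.apply_eq_smul
      simp only [ψ, LinearMap.sub_apply, LinearMap.smul_apply, LinearMap.id_apply]
      rw [show φ x = φL x from rfl, this, sub_self]
    rcases LinearMap.injective_or_eq_zero ψ with h | h
    · exact absurd (h (by rw [hψx, map_zero])) hx.right
    · refine ⟨c, fun y => ?_⟩
      have := LinearMap.ext_iff.mp h y
      simp only [ψ, LinearMap.sub_apply, LinearMap.smul_apply, LinearMap.id_apply,
        LinearMap.zero_apply, sub_eq_zero] at this
      exact this
  -- semisimplicity of W^n
  set n := finrank L W with hn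
  haveI hss : IsSemisimpleModule R (Fin n → W) := by
    apply IsSemisimpleModule.of_sSup_simples_eq_top
    rw [eq_top_iff, ← LinearMap.iSup_range_single (R := R) (φ := fun _ : Fin n => W)]
    refine iSup_le fun i => le_sSup ?_
    have hinj : Function.Injective ⇑(LinearMap.single R (fun _ : Fin n => W) i) :=
      fun a b h => by simpa using congrFun h i
    exact IsSimpleModule.congr (LinearEquiv.ofInjective _ hinj).symm
  rw [eq_top_iff]
  rintro f -
  let v : Basis (Fin n) L W := finBasis L W
  let w : Fin n → W := fun i => v i
  let U : Submodule R (Fin n → W) := Submodule.span R {w}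
  obtain ⟨U', hU'⟩ := exists_isCompl U
  let π : (Fin n → W) →ₗ[R] (Fin n → W) := U.subtype.comp (U.projectionOnto U' hU')
  have hπU : ∀ x ∈ U, π x = x := fun x hx => by
    show (U.projectionOnto U' hU' x : Fin n → W) = x
    rw [show x = ((⟨x, hx⟩ : U) : Fin n → W) from rfl,
      Submodule.projectionOnto_apply_left hU']
  have hπmem : ∀ x, π x ∈ U := fun x => (U.projectionOnto U' hU' x).2
  have hent : ∀ i j : Fin n, ∃ c : L, ∀ y : W, π (Pi.single j y) i = c • y := fun i j =>
    hD ((LinearMap.proj i).comp (π.comp (LinearMap.single R (fun _ : Fin n => W) j)))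
  choose c hc using hent
  have hπapply : ∀ (y : Fin n → W) (i : Fin n), π y i = ∑ j, c i j • y j := by
    intro y i
    conv_lhs => rw [show y = ∑ j, Pi.single j (y j) from (Finset.univ_sum_single y).symm]
    rw [map_sum]
    simp only [Finset.sum_apply]
    exact Finset.sum_congr rfl fun j _ => hc i j (y j)
  have hw : (fun i => f (w i)) ∈ U := by
    have h1 : π (fun i => f (w i)) = fun i => f (w i) := by
      funext i
      rw [hπapply]
      have h2 : π w = w := hπU w (Submodule.mem_span_singleton_self w)
      calc ∑ j, c i j • f (w j) = f (∑ j, c i j • w j) := by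
            rw [map_sum]; exact Finset.sum_congr rfl fun j _ => (f.map_smul _ _).symm
        _ = f (π w i) := by rw [hπapply]
        _ = f (w i) := by rw [h2]
    rw [← h1]; exact hπmem _
  obtain ⟨r, hr⟩ := Submodule.mem_span_singleton.mp hw
  have hf : τ.asAlgebraHom r = f := by
    apply v.ext
    intro i
    have := congrFun hr i
    simpa only [Pi.smul_apply, hsmul] using this
  rw [← hf]
  have : τ.asAlgebraHom r = r.coeff.sum fun g a => a • (τ g : W →ₗ[L] W) := by
    conv_lhs => rw [← MonoidAlgebra.sum_coeff_single r]
    rw [map_finsuppSum]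
    exact Finsupp.sum_congr fun g _ => τ.asAlgebraHom_single g _
  rw [this]
  refine Submodule.sum_mem _ fun g _ => Submodule.smul_mem _ _ (Submodule.subset_span ⟨g, rfl⟩)



open scoped TensorProduct

/-- Let `K` be a field, `V` a `K`-vector space of dimension `d`, and `ρ : G → GL(V)` an
absolutely irreducible representation of a group `G` (i.e. the base change of `V` to an
algebraic closure of `K` is irreducible).  Then there exist `g₁, …, g_{d²} ∈ G` such that
`ρ(g₁), …, ρ(g_{d²})` form a `K`-basis of `End_K(V)`, and the `d² × d²` matrix `M` with
entries `M_{k,l} = tr(ρ(g_k g_l))` is invertible. -/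
theorem exists_basis_of_images_and_trace_matrix_invertible
    (K : Type*) [Field K]
    (G : Type*) [Group G]
    (V : Type*) [AddCommGroup V] [Module K V] [FiniteDimensional K V]
    (ρ : Representation K G V)
    -- absolute irreducibility: the representation on `K̄ ⊗ V` is irreducible
    (hV : (⊤ : Submodule (AlgebraicClosure K) (AlgebraicClosure K ⊗[K] V)) ≠ ⊥)
    (habs : ∀ U : Submodule (AlgebraicClosure K) (AlgebraicClosure K ⊗[K] V),
      (∀ g : G, ∀ x ∈ U, (ρ g).baseChange (AlgebraicClosure K) x ∈ U) → U = ⊥ ∨ U = ⊤) :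
    ∃ g : Fin (Module.finrank K V * Module.finrank K V) → G,
      (LinearIndependent K fun i => (ρ (g i) : V →ₗ[K] V)) ∧
      Submodule.span K (Set.range fun i => (ρ (g i) : V →ₗ[K] V)) = ⊤ ∧
      IsUnit (Matrix.of fun i j => LinearMap.trace K V (ρ (g i * g j))) := by
  classical
  set L := AlgebraicClosure K with hL
  haveI : Nontrivial (L ⊗[K] V) := by
    by_contra h
    rw [not_nontrivial_iff_subsingleton] at h
    exact hV (Subsingleton.elim _ _)
  have hd : 0 < finrank K V := by
    have h1 : 0 < finrank L (L ⊗[K] V) := Module.finrank_pos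
    rwa [Module.finrank_baseChange] at h1
  set N := finrank K V * finrank K V with hN
  haveI : Nonempty (Fin N) := ⟨⟨0, by positivity⟩⟩
  -- the base-changed representation
  let τ : Representation L G (L ⊗[K] V) :=
    ((Module.End.baseChangeHom K L V).toRingHom.toMonoidHom).comp ρ
  have hτ : ∀ g : G, (τ g : L ⊗[K] V →ₗ[L] L ⊗[K] V) = (ρ g).baseChange L := fun g => rfl
  have hspanL : Submodule.span L (Set.range fun g : G => (τ g : L ⊗[K] V →ₗ[L] L ⊗[K] V)) = ⊤ :=
    my_burnside τ (fun U hU => habs U (fun g x hx => by rw [← hτ]; exact hU g x hx))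
  have hEndL : finrank L (Module.End L (L ⊗[K] V)) = N := by
    rw [Module.finrank_linearMap, Module.finrank_baseChange]
  obtain ⟨b, hbs, hbspan, hbli⟩ :=
    exists_linearIndependent L (Set.range fun g : G => (τ g : L ⊗[K] V →ₗ[L] L ⊗[K] V))
  rw [hspanL] at hbspan
  let bB : Basis b L (Module.End L (L ⊗[K] V)) := Basis.mk hbli (by rw [Subtype.range_val, hbspan])
  haveI : Fintype b := @Fintype.ofFinite b (Module.Finite.finite_basis bB)
  have hcardb : Fintype.card b = N := by rw [← hEndL, Module.finrank_eq_card_basis bB]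
  let e : Fin N ≃ b := (Fintype.equivFinOfCardEq hcardb).symm
  have hchoose : ∀ x : b, ∃ g : G, (τ g : L ⊗[K] V →ₗ[L] L ⊗[K] V) = (x : _) :=
    fun x => hbs x.2
  choose gb hgb using hchoose
  set g : Fin N → G := fun i => gb (e i) with hg
  -- independence over L
  have hliL : LinearIndependent L (fun i : Fin N => (τ (g i) : L ⊗[K] V →ₗ[L] L ⊗[K] V)) := by
    have h1 : (fun i : Fin N => (τ (g i) : L ⊗[K] V →ₗ[L] L ⊗[K] V)) =
        (fun x : b => (x : Module.End L (L ⊗[K] V))) ∘ e := funext fun i => hgb (e i)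
    rw [h1]
    exact hbli.comp e e.injective
  -- independence over K of base changes
  have hliK' : LinearIndependent K (fun i : Fin N => (τ (g i) : L ⊗[K] V →ₗ[L] L ⊗[K] V)) := by
    refine hliL.restrict_scalars ?_
    intro r s hrs
    have : algebraMap K L r = algebraMap K L s := by
      simpa [Algebra.smul_def] using hrs
    exact (algebraMap K L).injective this
  -- pull back
  have hliK : LinearIndependent K (fun i : Fin N => (ρ (g i) : V →ₗ[K] V)) := by
    refine LinearIndependent.of_comp (LinearMap.baseChangeHom K L V V) ?_
    have h1 : ((LinearMap.baseChangeHom K L V V) ∘ fun i : Fin N => (ρ (g i) : V →ₗ[K] V)) =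
        fun i : Fin N => (τ (g i) : L ⊗[K] V →ₗ[L] L ⊗[K] V) := rfl
    rw [h1]
    exact hliK'
  have hcard : Fintype.card (Fin N) = finrank K (Module.End K V) := by
    simp [Module.finrank_linearMap, hN]
  have hspanK : Submodule.span K (Set.range fun i : Fin N => (ρ (g i) : V →ₗ[K] V)) = ⊤ :=
    hliK.span_eq_top_of_card_eq_finrank hcard
  refine ⟨g, hliK, hspanK, ?_⟩
  -- the trace bilinear form
  let B : LinearMap.BilinForm K (Module.End K V) :=
    LinearMap.mk₂ K (fun f h => LinearMap.trace K V (f * h))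
      (fun f f' h => by simp [add_mul])
      (fun c f h => by simp [smul_mul_assoc])
      (fun f h h' => by simp [mul_add])
      (fun c f h => by simp [mul_smul_comm])
  have hB : B.Nondegenerate := by
    refine LinearMap.BilinForm.Nondegenerate.ofSeparatingLeft ?_
    intro f hf
    let bV := finBasis K V
    have hA : (LinearMap.toMatrix bV bV) f = 0 := by
      ext i j
      have h1 := hf ((Matrix.toLin bV bV) (Matrix.single j i (1 : K)))
      have h2 : LinearMap.trace K V (f * (Matrix.toLin bV bV) (Matrix.single j i 1)) =
          Matrix.trace ((LinearMap.toMatrix bV bV) f * Matrix.single j i 1) := by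
        rw [LinearMap.trace_eq_matrix_trace K bV, LinearMap.toMatrix_mul,
          LinearMap.toMatrix_toLin]
      have h3 : Matrix.trace ((LinearMap.toMatrix bV bV) f * Matrix.single j i (1 : K)) =
          (LinearMap.toMatrix bV bV) f i j := by
        simp [Matrix.trace, Matrix.diag, Matrix.mul_apply, Matrix.single, Matrix.of_apply,
          ite_and]
      rw [show (B f) ((Matrix.toLin bV bV) (Matrix.single j i (1:K))) =
        LinearMap.trace K V (f * (Matrix.toLin bV bV) (Matrix.single j i 1)) from rfl] at h1
      rw [h2, h3] at h1
      simpa using h1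
    exact (LinearMap.toMatrix bV bV).map_eq_zero_iff.mp hA
  let bE := basisOfLinearIndependentOfCardEqFinrank hliK hcard
  have hbE : ⇑bE = fun i : Fin N => (ρ (g i) : V →ₗ[K] V) :=
    coe_basisOfLinearIndependentOfCardEqFinrank _ _
  have hM : (Matrix.of fun i j : Fin N => LinearMap.trace K V (ρ (g i * g j))) =
      BilinForm.toMatrix bE B := by
    refine Matrix.ext fun i j => ?_
    simp only [Matrix.of_apply]
    refine Eq.trans ?_ (BilinForm.toMatrix_apply bE B i j).symm
    rw [hbE]
    show LinearMap.trace K V (ρ (g i * g j)) = LinearMap.trace K V (ρ (g i) * ρ (g j))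
    rw [map_mul]
  rw [hM]
  have hnd : (BilinForm.toMatrix bE B).Nondegenerate :=
    (LinearMap.BilinForm.nondegenerate_toMatrix_iff bE).mpr hB
  rw [Matrix.nondegenerate_iff_det_ne_zero] at hnd
  exact (Matrix.isUnit_iff_isUnit_det _).mpr (isUnit_iff_ne_zero.mpr hnd)
end
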